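/- Within the proof of the decomposition of STS(3w+3): with notation as in the setup, the set B_A of blocks entirely contained in A ∪ D covers at least w²/2 + 5w/2 pairs of points and at most w²/2 + 5w/2 + 3 pairs, and the number of pairs it covers is divisible by 3. -/

import Mathlib

variable {α : Type*} [DecidableEq α]

/-- `(S, B)` is a Steiner triple system: blocks are 3-subsets of `S`,
and every pair of distinct points of `S` lies in exactly one block. -/
def IsSTS (S : Finset α) (B : Finset (Finset α)) : Prop :=
  (∀ b ∈ B, b ⊆ S ∧ b.card = 3) ∧
  ∀ p ∈ S, ∀ q ∈ S, p ≠ q → ∃! b, b ∈ B ∧ p ∈ b ∧ q ∈ b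

/-- `T` is the block set of a transversal design with the three groups `A`, `B`, `C`:
every block meets every group in exactly one point, and every two points in
different groups meet in exactly one block. -/
def IsTD3 (A B C : Finset α) (T : Finset (Finset α)) : Prop :=
  (∀ b ∈ T, b ⊆ A ∪ B ∪ C ∧ (b ∩ A).card = 1 ∧ (b ∩ B).card = 1 ∧ (b ∩ C).card = 1) ∧
  ∀ p q : α, ((p ∈ A ∧ q ∈ B) ∨ (p ∈ A ∧ q ∈ C) ∨ (p ∈ B ∧ q ∈ C)) →
    ∃! b, b ∈ T ∧ p ∈ b ∧ q ∈ b

/-- `C` is an almost-sub-STS of the block set `Bl`, with support `S0` and missing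
triple `T`: `C ⊆ Bl` and `C = C' \ {T}` for some STS `(S0, C')` with `T ∈ C'`. -/
def IsAlmostSubSTS (Bl : Finset (Finset α)) (S0 : Finset α)
    (C : Finset (Finset α)) (T : Finset α) : Prop :=
  C ⊆ Bl ∧ T ∉ C ∧ IsSTS S0 (insert T C)

theorem sts_3w3_pair_count (S : Finset α) (Bl T : Finset (Finset α))
    (A B C D : Finset α) (w : ℕ)
    (hS : A ∪ B ∪ C ∪ D = S)
    (hA : A.card = w) (hB : B.card = w) (hC : C.card = w) (hD : D.card = 3)
    (hAB : Disjoint A B) (hAC : Disjoint A C) (hAD : Disjoint A D)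
    (hBC : Disjoint B C) (hBD : Disjoint B D) (hCD : Disjoint C D)
    (hSTS : IsSTS S Bl) (hsub : T ⊆ Bl) (hTD : IsTD3 A B C T)
    (hDnotblock : D ∉ Bl) :
    let BA := (Bl \ T).filter (fun b => b ⊆ A ∪ D)
    let n := (((A ∪ D).powersetCard 2).filter (fun p => ∃ b ∈ BA, p ⊆ b)).card
    w ^ 2 + 5 * w ≤ 2 * n ∧ 2 * n ≤ w ^ 2 + 5 * w + 6 ∧ 3 ∣ n := by
  intro BA n
  set P : Finset (Finset α) := (A ∪ D).powersetCard 2 with hP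
  set Cov : Finset (Finset α) := P.filter (fun p => ∃ b ∈ BA, p ⊆ b) with hCov
  have hADS : A ∪ D ⊆ S := by
    rw [← hS]; intro x hx
    simp only [Finset.mem_union] at hx ⊢; tauto
  -- facts about BA members
  have hBAmem : ∀ b ∈ BA, b ⊆ A ∪ D ∧ b ∈ Bl ∧ b ∉ T ∧ b.card = 3 := by
    intro b hb
    simp only [BA, Finset.mem_filter, Finset.mem_sdiff] at hb
    exact ⟨hb.2, hb.1.1, hb.1.2, (hSTS.1 b hb.1.1).2⟩
  -- Cov is the biUnion of pairs inside BA blocks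
  have hCovEq : Cov = BA.biUnion (fun b => b.powersetCard 2) := by
    ext p
    simp only [hCov, Finset.mem_filter, Finset.mem_biUnion, hP,
      Finset.mem_powersetCard]
    constructor
    · rintro ⟨⟨-, hc⟩, b, hb, hpb⟩
      exact ⟨b, hb, hpb, hc⟩
    · rintro ⟨b, hb, hpb, hc⟩
      obtain ⟨hbAD, -, -, -⟩ := hBAmem b hb
      exact ⟨⟨hpb.trans hbAD, hc⟩, b, hb, hpb⟩
  have hkey : n = 3 * BA.card := by
    have : Cov.card = ∑ b ∈ BA, (b.powersetCard 2).card := by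
      rw [hCovEq]
      apply Finset.card_biUnion
      intro b1 hb1 b2 hb2 hne
      rw [Function.onFun, Finset.disjoint_left]
      intro p hp1 hp2
      rw [Finset.mem_powersetCard] at hp1 hp2
      obtain ⟨x, y, hxy, hpxy⟩ := Finset.card_eq_two.1 hp1.2
      have hx1 : x ∈ b1 := hp1.1 (by simp [hpxy])
      have hy1 : y ∈ b1 := hp1.1 (by simp [hpxy])
      have hx2 : x ∈ b2 := hp2.1 (by simp [hpxy])
      have hy2 : y ∈ b2 := hp2.1 (by simp [hpxy])
      obtain ⟨hb1AD, hb1Bl, -, -⟩ := hBAmem b1 hb1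
      obtain ⟨hb2AD, hb2Bl, -, -⟩ := hBAmem b2 hb2
      have hxS : x ∈ S := hADS (hb1AD hx1)
      have hyS : y ∈ S := hADS (hb1AD hy1)
      obtain ⟨b, -, huniq⟩ := hSTS.2 x hxS y hyS hxy
      exact hne ((huniq b1 ⟨hb1Bl, hx1, hy1⟩).trans (huniq b2 ⟨hb2Bl, hx2, hy2⟩).symm)
    rw [show n = Cov.card from rfl, this]
    rw [Finset.sum_congr rfl (fun b hb => by
      rw [Finset.card_powersetCard, (hBAmem b hb).2.2.2])]
    simp [Finset.sum_const, mul_comm]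
  -- every pair not contained in D is covered
  have hcover : ∀ p ∈ P, ¬ p ⊆ D → p ∈ Cov := by
    intro p hpP hpD
    rw [hP, Finset.mem_powersetCard] at hpP
    obtain ⟨hpAD, hp2⟩ := hpP
    obtain ⟨x, y, hxy, hpxy⟩ := Finset.card_eq_two.1 hp2
    have hxAD : x ∈ A ∪ D := hpAD (by simp [hpxy])
    have hyAD : y ∈ A ∪ D := hpAD (by simp [hpxy])
    -- WLOG x ∈ A
    have hwlog : ∃ x' y', x' ∈ A ∧ y' ∈ A ∪ D ∧ x' ≠ y' ∧ p = {x', y'} := by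
      rcases Finset.mem_union.1 hxAD with hxA | hxD
      · exact ⟨x, y, hxA, hyAD, hxy, hpxy⟩
      · rcases Finset.mem_union.1 hyAD with hyA | hyD
        · exact ⟨y, x, hyA, hxAD, hxy.symm, by rw [hpxy]; exact Finset.pair_comm x y⟩
        · refine (hpD ?_).elim
          rw [hpxy]
          intro z hz
          simp only [Finset.mem_insert, Finset.mem_singleton] at hz
          rcases hz with h | h
          · rwa [h]
          · rw [h]; exact hyD
    obtain ⟨u, v, huA, hvAD, huv, hpuv⟩ := hwlog
    have huS : u ∈ S := hADS (Finset.mem_union_left _ huA)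
    have hvS : v ∈ S := hADS hvAD
    obtain ⟨b, ⟨hbBl, hub, hvb⟩, huniq⟩ := hSTS.2 u huS v hvS huv
    -- b ∉ T
    have hbT : b ∉ T := by
      intro hbT
      obtain ⟨hbsub, hbA, -, -⟩ := hTD.1 b hbT
      rcases Finset.mem_union.1 hvAD with hvA | hvD
      · have : 2 ≤ (b ∩ A).card := by
          apply Finset.one_lt_card.2
          exact ⟨u, by simp [hub, huA], v, by simp [hvb, hvA], huv⟩
        omega
      · have := hbsub hvb
        simp only [Finset.mem_union] at this
        rcases this with (h | h) | h
        · exact (Finset.disjoint_right.1 hAD hvD) h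
        · exact (Finset.disjoint_right.1 hBD hvD) h
        · exact (Finset.disjoint_right.1 hCD hvD) h
    -- b ⊆ A ∪ D
    have hbAD : b ⊆ A ∪ D := by
      intro r hrb
      have hrS : r ∈ b → r ∈ S := fun h => (hSTS.1 b hbBl).1 h
      have : r ∈ A ∪ B ∪ C ∪ D := by rw [hS]; exact hrS hrb
      simp only [Finset.mem_union] at this ⊢
      rcases this with ((h | h) | h) | h
      · exact Or.inl h
      · -- r ∈ B : contradiction
        exfalso
        have hur : u ≠ r := fun he => (Finset.disjoint_left.1 hAB (he ▸ huA)) h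
        obtain ⟨t, ⟨htT, hut, hrt⟩, -⟩ := hTD.2 u r (Or.inl ⟨huA, h⟩)
        have hrSS : r ∈ S := hrS hrb
        obtain ⟨b', -, huniq'⟩ := hSTS.2 u huS r hrSS hur
        have h1 := huniq' b ⟨hbBl, hub, hrb⟩
        have h2 := huniq' t ⟨hsub htT, hut, hrt⟩
        exact hbT (h1.trans h2.symm ▸ htT)
      · exfalso
        have hur : u ≠ r := fun he => (Finset.disjoint_left.1 hAC (he ▸ huA)) h
        obtain ⟨t, ⟨htT, hut, hrt⟩, -⟩ := hTD.2 u r (Or.inr (Or.inl ⟨huA, h⟩))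
        have hrSS : r ∈ S := hrS hrb
        obtain ⟨b', -, huniq'⟩ := hSTS.2 u huS r hrSS hur
        have h1 := huniq' b ⟨hbBl, hub, hrb⟩
        have h2 := huniq' t ⟨hsub htT, hut, hrt⟩
        exact hbT (h1.trans h2.symm ▸ htT)
      · exact Or.inr h
    have hbBA : b ∈ BA := by
      simp only [BA, Finset.mem_filter, Finset.mem_sdiff]
      exact ⟨⟨hbBl, hbT⟩, hbAD⟩
    rw [hCov, Finset.mem_filter]
    refine ⟨by rw [hP, Finset.mem_powersetCard]; exact ⟨hpAD, hp2⟩, b, hbBA, ?_⟩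
    rw [hpuv]
    intro z hz
    rcases Finset.mem_insert.1 hz with h | h
    · rwa [h]
    · rw [Finset.mem_singleton.1 h]; exact hvb
  -- card computations
  have hADcard : (A ∪ D).card = w + 3 := by
    rw [Finset.card_union_of_disjoint hAD, hA, hD]
  have hPcard : P.card = (w + 3).choose 2 := by
    rw [hP, Finset.card_powersetCard, hADcard]
  have h2P : 2 * P.card = w ^ 2 + 5 * w + 6 := by
    rw [hPcard, Nat.choose_two_right]
    obtain ⟨k, hk⟩ := Nat.even_mul_succ_self (w + 2)
    have h2 : (w + 2) * (w + 2 + 1) = w ^ 2 + 5 * w + 6 := by ring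
    have h3 : (w + 3) * (w + 3 - 1) = w ^ 2 + 5 * w + 6 := by
      have h4 : w + 3 - 1 = w + 2 := rfl
      rw [h4]; ring
    have h1 : (w + 3) * (w + 3 - 1) = 2 * k := by omega
    rw [h1, Nat.mul_div_cancel_left _ (by norm_num : 0 < 2)]
    omega
  have hCovP : Cov ⊆ P := Finset.filter_subset _ _
  have hupper : n ≤ P.card := Finset.card_le_card hCovP
  -- P \ Cov ⊆ D.powersetCard 2
  have hlower : P.card ≤ n + 3 := by
    have hsub2 : P \ Cov ⊆ D.powersetCard 2 := by
      intro p hp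
      rw [Finset.mem_sdiff] at hp
      rw [Finset.mem_powersetCard]
      refine ⟨?_, (Finset.mem_powersetCard.1 hp.1).2⟩
      by_contra h
      exact hp.2 (hcover p hp.1 h)
    have : (P \ Cov).card ≤ (D.powersetCard 2).card := Finset.card_le_card hsub2
    rw [Finset.card_powersetCard, hD] at this
    have hsd : (P \ Cov).card = P.card - Cov.card := Finset.card_sdiff_of_subset hCovP
    have : P.card - n ≤ 3 := by rw [← hsd]; simpa using this
    omega
  refine ⟨by omega, by omega, ⟨BA.card, hkey⟩⟩
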